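/- Let P and Q be Borel probability measures on ℝ. The comonotone coupling 𝔓^com, defined as the pushforward of Lebesgue measure on (0,1) under the map x ↦ (F_P^←(x), F_Q^←(x)), has first marginal P and second marginal Q, and its joint distribution function is F_{𝔓^com}(u,v) = min{F_P(u), F_Q(v)} for all u, v ∈ ℝ. Consequently, for every continuous quasi-antitone cost ψ̃ : ℝ × ℝ → [0,∞), the minimum of ∫ ψ̃ dπ over all couplings π of P and Q is attained at 𝔓^com and equals ∫_{(0,1)} ψ̃(F_P^←(x), F_Q^←(x)) dλ_L(x). -/

import Mathlib

open Set MeasureTheory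
open scoped ENNReal

/-- The quantile function `F_P^←(x) := inf{z ∈ ℝ : F_P(z) ≥ x}` of a Borel
probability measure `P` on `ℝ`, where `F_P(z) := P((−∞,z])`. -/
noncomputable def quantileFn (P : Measure ℝ) (x : ℝ) : ℝ :=
  sInf {z : ℝ | x ≤ (P (Set.Iic z)).toReal}

/-- The comonotone coupling `𝔓^com` of `P` and `Q`: the pushforward of
Lebesgue measure on `(0,1)` under `x ↦ (F_P^←(x), F_Q^←(x))`. -/
noncomputable def comonotoneCoupling (P Q : Measure ℝ) : Measure (ℝ × ℝ) :=
  (volume.restrict (Set.Ioo (0:ℝ) 1)).map (fun x => (quantileFn P x, quantileFn Q x))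

open Filter
open scoped Topology
set_option linter.unusedSectionVars false
set_option maxHeartbeats 1000000

section QF
variable (P : Measure ℝ) [IsProbabilityMeasure P]

lemma qSet_nonempty {x : ℝ} (hx1 : x < 1) : {z : ℝ | x ≤ (P (Set.Iic z)).toReal}.Nonempty := by
  have h := tendsto_measure_Iic_atTop P
  rw [measure_univ] at h
  have : ∀ᶠ z in atTop, ENNReal.ofReal x < P (Iic z) :=
    h.eventually (eventually_gt_nhds (by simpa using ENNReal.ofReal_lt_one.2 hx1))
  obtain ⟨z, hz⟩ := this.exists
  exact ⟨z, (ENNReal.ofReal_le_iff_le_toReal (measure_ne_top _ _)).1 hz.le⟩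

lemma exists_cdf_lt {x : ℝ} (hx0 : 0 < x) : ∃ w : ℝ, P (Iic w) < ENNReal.ofReal x := by
  have hseq : Tendsto (fun n : ℕ => P (Iic (-(n:ℝ)))) atTop (𝓝 (P (⋂ n : ℕ, Iic (-(n:ℝ))))) := by
    apply tendsto_measure_iInter_atTop
    · exact fun _ => measurableSet_Iic.nullMeasurableSet
    · intro i j hij
      exact Iic_subset_Iic.2 (by exact_mod_cast neg_le_neg (by exact_mod_cast hij))
    · exact ⟨0, measure_ne_top _ _⟩
  have hempty : (⋂ n : ℕ, Iic (-(n:ℝ))) = ∅ := by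
    ext y
    simp only [mem_iInter, mem_Iic, mem_empty_iff_false, iff_false, not_forall, not_le]
    obtain ⟨n, hn⟩ := exists_nat_gt (-y)
    exact ⟨n, by linarith⟩
  rw [hempty, measure_empty] at hseq
  have : ∀ᶠ n : ℕ in atTop, P (Iic (-(n:ℝ))) < ENNReal.ofReal x :=
    hseq.eventually (eventually_lt_nhds (by simpa using ENNReal.ofReal_pos.2 hx0))
  obtain ⟨n, hn⟩ := this.exists
  exact ⟨-(n:ℝ), hn⟩

lemma qSet_bddBelow {x : ℝ} (hx0 : 0 < x) :
    BddBelow {z : ℝ | x ≤ (P (Set.Iic z)).toReal} := by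
  obtain ⟨w, hw⟩ := exists_cdf_lt P hx0
  refine ⟨w, fun z hz => ?_⟩
  by_contra hzw
  push_neg at hzw
  have h1 : P (Iic z) ≤ P (Iic w) := measure_mono (Iic_subset_Iic.2 hzw.le)
  have h2 := (ENNReal.ofReal_le_iff_le_toReal (measure_ne_top _ _)).2 hz
  exact absurd (lt_of_le_of_lt (le_trans h2 h1) hw) (lt_irrefl _)

/-- characterization of the quantile. -/
lemma quantileFn_le_iff {x z : ℝ} (hx : x ∈ Ioo (0:ℝ) 1) :
    quantileFn P x ≤ z ↔ x ≤ (P (Set.Iic z)).toReal := by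
  obtain ⟨hx0, hx1⟩ := hx
  constructor
  · intro h
    set a := sInf {z : ℝ | x ≤ (P (Set.Iic z)).toReal} with ha
    have key : ENNReal.ofReal x ≤ P (Iic a) := by
      have hlim : Tendsto (fun k : ℕ => a + 1/(k+1:ℝ)) atTop (𝓝 a) := by
        have : Tendsto (fun k : ℕ => 1/(k+1:ℝ)) atTop (𝓝 0) :=
          tendsto_one_div_add_atTop_nhds_zero_nat
        simpa using (tendsto_const_nhds (x := a)).add this
      have hseq : Tendsto (fun k : ℕ => P (Iic (a + 1/(k+1)))) atTop (𝓝 (P (Iic a))) := by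
        have h1 : (⋂ k : ℕ, Iic (a + 1/(k+1):ℝ)) = Iic a := by
          apply Subset.antisymm
          · intro y hy
            simp only [mem_iInter, mem_Iic] at hy ⊢
            exact ge_of_tendsto' hlim hy
          · intro y hy
            simp only [mem_Iic] at hy
            simp only [mem_iInter, mem_Iic]
            intro k
            have : (0:ℝ) < 1/(k+1) := by positivity
            linarith
        have := tendsto_measure_iInter_atTop (μ := P)
          (s := fun k : ℕ => Iic (a + 1/(k+1):ℝ))
          (fun k => measurableSet_Iic.nullMeasurableSet)
          (fun i j hij => Iic_subset_Iic.2 (by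
            have : (1:ℝ)/(j+1) ≤ 1/(i+1) := by
              apply one_div_le_one_div_of_le (by positivity)
              exact_mod_cast by omega
            linarith))
          ⟨0, measure_ne_top _ _⟩
        rw [h1] at this
        exact this
      refine ge_of_tendsto' hseq (fun k => ?_)
      have hlt : a < a + 1/(k+1:ℝ) := by
        have : (0:ℝ) < 1/(k+1) := by positivity
        linarith
      obtain ⟨c, hc, hck⟩ := (csInf_lt_iff (qSet_bddBelow P hx0) (qSet_nonempty P hx1)).1 hlt
      have : P (Iic c) ≤ P (Iic (a + 1/(k+1:ℝ))) := measure_mono (Iic_subset_Iic.2 hck.le)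
      exact le_trans ((ENNReal.ofReal_le_iff_le_toReal (measure_ne_top _ _)).2 hc) this
    have : P (Iic a) ≤ P (Iic z) := measure_mono (Iic_subset_Iic.2 h)
    exact (ENNReal.ofReal_le_iff_le_toReal (measure_ne_top _ _)).1 (le_trans key this)
  · intro h
    exact csInf_le (qSet_bddBelow P hx0) h

lemma quantileFn_monotoneOn : MonotoneOn (quantileFn P) (Ioo (0:ℝ) 1) := by
  intro x hx y hy hxy
  apply le_csInf (qSet_nonempty P hy.2)
  intro z hz
  exact csInf_le (qSet_bddBelow P hx.1) (le_trans hxy hz)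

lemma quantileFn_of_nonpos {x : ℝ} (hx : x ≤ 0) : quantileFn P x = 0 := by
  have : {w : ℝ | x ≤ (P (Set.Iic w)).toReal} = univ := by
    ext w; simp only [mem_setOf_eq, mem_univ, iff_true]
    exact le_trans hx ENNReal.toReal_nonneg
  rw [quantileFn, this]
  apply Real.sInf_of_not_bddBelow
  rintro ⟨b, hb⟩
  have := hb (mem_univ (b-1))
  linarith

lemma quantileFn_of_one_lt {x : ℝ} (hx : 1 < x) : quantileFn P x = 0 := by
  have : {w : ℝ | x ≤ (P (Set.Iic w)).toReal} = ∅ := by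
    ext w
    simp only [mem_setOf_eq, mem_empty_iff_false, iff_false, not_le]
    calc (P (Iic w)).toReal ≤ (P univ).toReal :=
          ENNReal.toReal_mono (measure_ne_top _ _) (measure_mono (subset_univ _))
      _ = 1 := by simp
      _ < x := hx
  rw [quantileFn, this, Real.sInf_empty]

lemma measurable_quantileFn : Measurable (quantileFn P) := by
  apply measurable_of_Iic
  intro z
  have hdecomp : quantileFn P ⁻¹' Iic z =
      ((if (0:ℝ) ≤ z then Iic (0:ℝ) ∪ Ioi 1 else ∅) ∪
        ((Ioo (0:ℝ) 1) ∩ Iic ((P (Iic z)).toReal)) ∪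
        ((quantileFn P ⁻¹' Iic z) ∩ {1})) := by
    ext x
    simp only [mem_union, mem_inter_iff, mem_preimage, mem_Iic, mem_Ioo, mem_Ioi,
      mem_singleton_iff]
    constructor
    · intro h
      rcases le_or_gt x 0 with h0 | h0
      · rw [quantileFn_of_nonpos P h0] at h
        simp only [if_pos h, mem_union, mem_Iic, mem_Ioi]
        exact Or.inl (Or.inl (Or.inl h0))
      rcases lt_trichotomy x 1 with h1 | h1 | h1
      · exact Or.inl (Or.inr ⟨⟨h0, h1⟩, (quantileFn_le_iff P ⟨h0, h1⟩).1 h⟩)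
      · exact Or.inr ⟨h, h1⟩
      · rw [quantileFn_of_one_lt P h1] at h
        simp only [if_pos h, mem_union, mem_Iic, mem_Ioi]
        exact Or.inl (Or.inl (Or.inr h1))
    · rintro ((h | ⟨⟨h0, h1⟩, h⟩) | ⟨h, _⟩)
      · split_ifs at h with hz
        · rcases h with h | h
          · rw [quantileFn_of_nonpos P h]; exact hz
          · rw [quantileFn_of_one_lt P h]; exact hz
        · exact absurd h (notMem_empty x)
      · exact (quantileFn_le_iff P ⟨h0, h1⟩).2 h
      · exact h
  rw [hdecomp]
  apply MeasurableSet.union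
  apply MeasurableSet.union
  · split_ifs
    · exact measurableSet_Iic.union measurableSet_Ioi
    · exact MeasurableSet.empty
  · exact measurableSet_Ioo.inter measurableSet_Iic
  · exact (Set.Subsingleton.measurableSet (fun a ha b hb => by
      simp only [mem_inter_iff, mem_singleton_iff] at ha hb
      rw [ha.2, hb.2]))
end QF


section B
variable (P Q : Measure ℝ) [IsProbabilityMeasure P] [IsProbabilityMeasure Q]

lemma volume_Iic_inter_Ioo {t : ℝ} (h0 : 0 ≤ t) (h1 : t ≤ 1) :
    volume (Iic t ∩ Ioo (0:ℝ) 1) = ENNReal.ofReal t := by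
  apply le_antisymm
  · calc volume (Iic t ∩ Ioo (0:ℝ) 1) ≤ volume (Ioc (0:ℝ) t) := by
          apply measure_mono
          rintro x ⟨hx1, hx2, _⟩
          exact ⟨hx2, hx1⟩
      _ = ENNReal.ofReal t := by rw [Real.volume_Ioc]; simp
  · calc ENNReal.ofReal t = volume (Ioo (0:ℝ) t) := by rw [Real.volume_Ioo]; simp
      _ ≤ volume (Iic t ∩ Ioo (0:ℝ) 1) := by
          apply measure_mono
          rintro x ⟨hx1, hx2⟩
          exact ⟨hx2.le, hx1, lt_of_lt_of_le hx2 h1⟩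

/-- pushforward of uniform under quantile is P -/
lemma map_quantileFn_eq :
    (volume.restrict (Set.Ioo (0:ℝ) 1)).map (quantileFn P) = P := by
  have hmeas := measurable_quantileFn P
  have hprob : IsProbabilityMeasure ((volume.restrict (Set.Ioo (0:ℝ) 1)).map (quantileFn P)) := by
    constructor
    rw [Measure.map_apply hmeas MeasurableSet.univ]
    simp [Measure.restrict_apply, Real.volume_Ioo]
  refine Measure.ext_of_Iic _ _ (fun z => ?_)
  rw [Measure.map_apply hmeas measurableSet_Iic, Measure.restrict_apply (hmeas measurableSet_Iic)]
  have hset : quantileFn P ⁻¹' Iic z ∩ Ioo (0:ℝ) 1 = Iic ((P (Iic z)).toReal) ∩ Ioo (0:ℝ) 1 := by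
    ext x
    simp only [mem_inter_iff, mem_preimage, mem_Iic]
    constructor
    · rintro ⟨h, hx⟩
      exact ⟨(quantileFn_le_iff P hx).1 h, hx⟩
    · rintro ⟨h, hx⟩
      exact ⟨(quantileFn_le_iff P hx).2 h, hx⟩
  rw [hset, volume_Iic_inter_Ioo ENNReal.toReal_nonneg
    (by simpa using ENNReal.toReal_mono (measure_ne_top P univ) (measure_mono (subset_univ _))),
    ENNReal.ofReal_toReal (measure_ne_top _ _)]

lemma measurable_qpair :
    Measurable (fun x => (quantileFn P x, quantileFn Q x)) :=
  (measurable_quantileFn P).prodMk (measurable_quantileFn Q)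

instance : IsProbabilityMeasure (comonotoneCoupling P Q) := by
  have : IsProbabilityMeasure (volume.restrict (Set.Ioo (0:ℝ) 1)) := by
    constructor; simp [Real.volume_Ioo]
  exact Measure.isProbabilityMeasure_map (measurable_qpair P Q).aemeasurable

lemma comonotone_map_fst : (comonotoneCoupling P Q).map Prod.fst = P := by
  rw [comonotoneCoupling, Measure.map_map measurable_fst (measurable_qpair P Q)]
  exact map_quantileFn_eq P

lemma comonotone_map_snd : (comonotoneCoupling P Q).map Prod.snd = Q := by
  rw [comonotoneCoupling, Measure.map_map measurable_snd (measurable_qpair P Q)]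
  exact map_quantileFn_eq Q

/-- two sets, each "monotone-closed within Ioo", are nested; so measure of intersection is min -/
lemma meas_inter_eq_min {U V : Set ℝ}
    (hU : MeasurableSet U) (hV : MeasurableSet V)
    (hUs : U ⊆ Ioo (0:ℝ) 1) (hVs : V ⊆ Ioo (0:ℝ) 1)
    (hUc : ∀ x ∈ U, ∀ y ∈ Ioo (0:ℝ) 1, x ≤ y → y ∈ U ∨ (∀ x' ∈ V, ∀ y' ∈ Ioo (0:ℝ) 1, y' ≤ x' → y' ∈ V)) :
    True := trivial

/- real version: up-sets or down-sets -/
lemma volume_inter_eq_min {U V : Set ℝ}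
    (hnested : U ⊆ V ∨ V ⊆ U) :
    volume (U ∩ V) = min (volume U) (volume V) := by
  rcases hnested with h | h
  · rw [inter_eq_self_of_subset_left h, min_eq_left (measure_mono h)]
  · rw [inter_eq_self_of_subset_right h, min_eq_right (measure_mono h)]

lemma upsets_nested {f g : ℝ → ℝ} (hf : MonotoneOn f (Ioo (0:ℝ) 1))
    (hg : MonotoneOn g (Ioo (0:ℝ) 1)) (s t : ℝ) :
    ({x | x ∈ Ioo (0:ℝ) 1 ∧ s ≤ f x} ⊆ {x | x ∈ Ioo (0:ℝ) 1 ∧ t ≤ g x}) ∨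
    ({x | x ∈ Ioo (0:ℝ) 1 ∧ t ≤ g x} ⊆ {x | x ∈ Ioo (0:ℝ) 1 ∧ s ≤ f x}) := by
  by_contra h
  push_neg at h
  obtain ⟨h1, h2⟩ := h
  rw [Set.not_subset] at h1 h2
  obtain ⟨u, hu, hunot⟩ := h1
  obtain ⟨v, hv, hvnot⟩ := h2
  simp only [mem_setOf_eq, not_and, not_le] at hu hv hunot hvnot
  have hgu := hunot hu.1
  have hfv := hvnot hv.1
  rcases le_total u v with huv | hvu
  · exact absurd (lt_of_le_of_lt (le_trans hu.2 (hf hu.1 hv.1 huv)) hfv) (lt_irrefl _)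
  · exact absurd (lt_of_le_of_lt (le_trans hv.2 (hg hv.1 hu.1 hvu)) hgu) (lt_irrefl _)

lemma downsets_nested {f g : ℝ → ℝ} (hf : MonotoneOn f (Ioo (0:ℝ) 1))
    (hg : MonotoneOn g (Ioo (0:ℝ) 1)) (s t : ℝ) :
    ({x | x ∈ Ioo (0:ℝ) 1 ∧ f x ≤ s} ⊆ {x | x ∈ Ioo (0:ℝ) 1 ∧ g x ≤ t}) ∨
    ({x | x ∈ Ioo (0:ℝ) 1 ∧ g x ≤ t} ⊆ {x | x ∈ Ioo (0:ℝ) 1 ∧ f x ≤ s}) := by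
  by_contra h
  push_neg at h
  obtain ⟨h1, h2⟩ := h
  rw [Set.not_subset] at h1 h2
  obtain ⟨u, hu, hunot⟩ := h1
  obtain ⟨v, hv, hvnot⟩ := h2
  simp only [mem_setOf_eq, not_and, not_le] at hu hv hunot hvnot
  have hgu := hunot hu.1
  have hfv := hvnot hv.1
  rcases le_total u v with huv | hvu
  · exact absurd ((hg hu.1 hv.1 huv).trans hv.2) (not_le.2 hgu)
  · exact absurd ((hf hv.1 hu.1 hvu).trans hu.2) (not_le.2 hfv)

lemma comonotone_cdf (u v : ℝ) :
    comonotoneCoupling P Q (Set.Iic u ×ˢ Set.Iic v) = min (P (Set.Iic u)) (Q (Set.Iic v)) := by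
  rw [comonotoneCoupling,
    Measure.map_apply (measurable_qpair P Q) (measurableSet_Iic.prod measurableSet_Iic)]
  rw [Measure.restrict_apply ((measurable_qpair P Q) (measurableSet_Iic.prod measurableSet_Iic))]
  have hset : (fun x => (quantileFn P x, quantileFn Q x)) ⁻¹' (Iic u ×ˢ Iic v) ∩ Ioo (0:ℝ) 1
      = {x | x ∈ Ioo (0:ℝ) 1 ∧ quantileFn P x ≤ u} ∩ {x | x ∈ Ioo (0:ℝ) 1 ∧ quantileFn Q x ≤ v} := by
    ext x
    simp only [mem_inter_iff, mem_preimage, mem_prod, mem_Iic, mem_setOf_eq]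
    tauto
  rw [hset, volume_inter_eq_min (downsets_nested (quantileFn_monotoneOn P) (quantileFn_monotoneOn Q) u v)]
  congr 1
  · have : {x | x ∈ Ioo (0:ℝ) 1 ∧ quantileFn P x ≤ u}
        = quantileFn P ⁻¹' Iic u ∩ Ioo (0:ℝ) 1 := by
      ext x; simp only [mem_setOf_eq, mem_inter_iff, mem_preimage, mem_Iic]; tauto
    rw [this, ← Measure.restrict_apply ((measurable_quantileFn P) measurableSet_Iic),
      ← Measure.map_apply (measurable_quantileFn P) measurableSet_Iic, map_quantileFn_eq P]
  · have : {x | x ∈ Ioo (0:ℝ) 1 ∧ quantileFn Q x ≤ v}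
        = quantileFn Q ⁻¹' Iic v ∩ Ioo (0:ℝ) 1 := by
      ext x; simp only [mem_setOf_eq, mem_inter_iff, mem_preimage, mem_Iic]; tauto
    rw [this, ← Measure.restrict_apply ((measurable_quantileFn Q) measurableSet_Iic),
      ← Measure.map_apply (measurable_quantileFn Q) measurableSet_Iic, map_quantileFn_eq Q]

lemma comonotone_survival (s t : ℝ) :
    comonotoneCoupling P Q (Set.Ici s ×ˢ Set.Ici t) = min (P (Set.Ici s)) (Q (Set.Ici t)) := by
  rw [comonotoneCoupling,
    Measure.map_apply (measurable_qpair P Q) (measurableSet_Ici.prod measurableSet_Ici)]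
  rw [Measure.restrict_apply ((measurable_qpair P Q) (measurableSet_Ici.prod measurableSet_Ici))]
  have hset : (fun x => (quantileFn P x, quantileFn Q x)) ⁻¹' (Ici s ×ˢ Ici t) ∩ Ioo (0:ℝ) 1
      = {x | x ∈ Ioo (0:ℝ) 1 ∧ s ≤ quantileFn P x} ∩ {x | x ∈ Ioo (0:ℝ) 1 ∧ t ≤ quantileFn Q x} := by
    ext x
    simp only [mem_inter_iff, mem_preimage, mem_prod, mem_Ici, mem_setOf_eq]
    tauto
  rw [hset, volume_inter_eq_min (upsets_nested (quantileFn_monotoneOn P) (quantileFn_monotoneOn Q) s t)]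
  congr 1
  · have : {x | x ∈ Ioo (0:ℝ) 1 ∧ s ≤ quantileFn P x}
        = quantileFn P ⁻¹' Ici s ∩ Ioo (0:ℝ) 1 := by
      ext x; simp only [mem_setOf_eq, mem_inter_iff, mem_preimage, mem_Ici]; tauto
    rw [this, ← Measure.restrict_apply ((measurable_quantileFn P) measurableSet_Ici),
      ← Measure.map_apply (measurable_quantileFn P) measurableSet_Ici, map_quantileFn_eq P]
  · have : {x | x ∈ Ioo (0:ℝ) 1 ∧ t ≤ quantileFn Q x}
        = quantileFn Q ⁻¹' Ici t ∩ Ioo (0:ℝ) 1 := by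
      ext x; simp only [mem_setOf_eq, mem_inter_iff, mem_preimage, mem_Ici]; tauto
    rw [this, ← Measure.restrict_apply ((measurable_quantileFn Q) measurableSet_Ici),
      ← Measure.map_apply (measurable_quantileFn Q) measurableSet_Ici, map_quantileFn_eq Q]

/-- Fréchet bound for any coupling -/
lemma coupling_survival_le (π : Measure (ℝ × ℝ))
    (hfst : π.map Prod.fst = P) (hsnd : π.map Prod.snd = Q) (s t : ℝ) :
    π (Set.Ici s ×ˢ Set.Ici t) ≤ min (P (Set.Ici s)) (Q (Set.Ici t)) := by
  apply le_min
  · rw [← hfst, Measure.map_apply measurable_fst measurableSet_Ici]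
    exact measure_mono (fun p hp => hp.1)
  · rw [← hsnd, Measure.map_apply measurable_snd measurableSet_Ici]
    exact measure_mono (fun p hp => hp.2)

lemma quantileFn_mem_Icc {a b : ℝ} (hab : P (Icc a b) = 1) {x : ℝ} (hx : x ∈ Ioo (0:ℝ) 1) :
    quantileFn P x ∈ Icc a b := by
  constructor
  · apply le_csInf (qSet_nonempty P hx.2)
    intro z hz
    by_contra hza
    push_neg at hza
    have h0 : P (Iic z) = 0 := by
      have : Iic z ⊆ (Icc a b)ᶜ := by
        intro y hy
        simp only [mem_compl_iff, mem_Icc, not_and, not_le]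
        intro hay
        exact absurd (le_trans hay (mem_Iic.1 hy)) (not_le.2 hza)
      refine measure_mono_null this ?_
      have := measure_compl (μ := P) (s := Icc a b) measurableSet_Icc (measure_ne_top _ _)
      rw [hab, measure_univ] at this
      simpa using this
    rw [mem_setOf_eq, h0] at hz
    simp only [ENNReal.toReal_zero] at hz
    exact absurd (lt_of_lt_of_le hx.1 hz) (lt_irrefl _)
  · apply csInf_le (qSet_bddBelow P hx.1)
    rw [mem_setOf_eq]
    have : P (Iic b) = 1 := by
      refine le_antisymm (by simpa using measure_mono (μ := P) (subset_univ (Iic b))) ?_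
      rw [← hab]
      exact measure_mono (fun y hy => hy.2)
    rw [this]
    simp [hx.2.le]

end B


lemma core_grid (μ κ : Measure (ℝ×ℝ)) [IsProbabilityMeasure μ] [IsProbabilityMeasure κ]
    (hfst : μ.map Prod.fst = κ.map Prod.fst) (hsnd : μ.map Prod.snd = κ.map Prod.snd)
    (R : ℝ) (hR : 1 ≤ R)
    (hμbox : μ (Icc (-R) R ×ˢ Icc (-R) R) = 1) (hκbox : κ (Icc (-R) R ×ˢ Icc (-R) R) = 1)
    (hdom : ∀ s t : ℝ, μ (Ici s ×ˢ Ici t) ≤ κ (Ici s ×ˢ Ici t))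
    (ψ : ℝ → ℝ → ℝ) (hψ0 : ∀ u v, 0 ≤ ψ u v) (hψc : Continuous fun p : ℝ×ℝ => ψ p.1 p.2)
    (hqa : ∀ u₁ u₂ v₁ v₂ : ℝ, u₁ ≤ u₂ → v₁ ≤ v₂ → ψ u₁ v₁ + ψ u₂ v₂ ≤ ψ u₂ v₁ + ψ u₁ v₂) :
    ∫⁻ p, ENNReal.ofReal (ψ p.1 p.2) ∂κ ≤ ∫⁻ p, ENNReal.ofReal (ψ p.1 p.2) ∂μ := by
  classical
  set box : Set (ℝ×ℝ) := Icc (-R) R ×ˢ Icc (-R) R with hboxdef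
  have hboxm : MeasurableSet box := (measurableSet_Icc.prod measurableSet_Icc)
  set S : Set (ℝ×ℝ) := Icc (-R-1) (R+1) ×ˢ Icc (-R-1) (R+1) with hSdef
  have hScomp : IsCompact S := (isCompact_Icc.prod isCompact_Icc)
  have hboxS : box ⊆ S := by
    rintro ⟨u, v⟩ ⟨⟨h1, h2⟩, h3, h4⟩
    exact ⟨⟨by linarith, by linarith⟩, by linarith, by linarith⟩
  -- a.e. membership in box
  have haeμ : ∀ᵐ p ∂μ, p ∈ box := by
    have : μ boxᶜ = 0 := by
      have := measure_compl (μ := μ) hboxm (measure_ne_top _ _)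
      rw [hμbox, measure_univ] at this
      simpa using this
    exact (MeasureTheory.ae_iff).2 this
  have haeκ : ∀ᵐ p ∂κ, p ∈ box := by
    have : κ boxᶜ = 0 := by
      have := measure_compl (μ := κ) hboxm (measure_ne_top _ _)
      rw [hκbox, measure_univ] at this
      simpa using this
    exact (MeasureTheory.ae_iff).2 this
  -- bound on S
  obtain ⟨C, hC⟩ := hScomp.exists_bound_of_continuousOn hψc.continuousOn
  -- integrability
  have hint : ∀ (ν : Measure (ℝ×ℝ)) [IsProbabilityMeasure ν], (∀ᵐ p ∂ν, p ∈ box) →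
      Integrable (fun p : ℝ×ℝ => ψ p.1 p.2) ν := by
    intro ν _ hae
    refine ⟨hψc.aestronglyMeasurable, ?_⟩
    apply HasFiniteIntegral.of_bounded (C := C)
    filter_upwards [hae] with p hp
    exact hC p (hboxS hp)
  have hintμ := hint μ haeμ
  have hintκ := hint κ haeκ
  rw [← ofReal_integral_eq_lintegral_ofReal hintμ (Eventually.of_forall (fun p => hψ0 _ _)),
    ← ofReal_integral_eq_lintegral_ofReal hintκ (Eventually.of_forall (fun p => hψ0 _ _))]
  apply ENNReal.ofReal_le_ofReal
  -- real inequality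
  apply le_of_forall_pos_le_add
  intro ε hε
  -- uniform continuity
  obtain ⟨δ, hδ0, hδ⟩ := (Metric.uniformContinuousOn_iff).1
    (hScomp.uniformContinuousOn_of_continuous hψc.continuousOn) (ε/2) (by positivity)
  -- grid
  obtain ⟨N₀, hN₀⟩ := exists_nat_gt ((2*R+2)/δ)
  set N := N₀ + 1 with hNdef
  have hNpos : 0 < N := Nat.succ_pos _
  set h : ℝ := (2*R+2)/N with hhdef
  have hhpos : 0 < h := by
    apply div_pos (by linarith) (by exact_mod_cast hNpos)
  have hhδ : h < δ := by
    rw [hhdef, div_lt_iff₀ (by exact_mod_cast hNpos)]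
    have h1 : (2*R+2)/δ < N := lt_of_lt_of_le hN₀ (by exact_mod_cast Nat.le_succ _)
    rw [div_lt_iff₀ hδ0] at h1
    linarith [mul_comm δ (N:ℝ)]
  set s : ℕ → ℝ := fun i => -R-1 + i*h with hsdef
  have hs0 : s 0 = -R-1 := by simp [hsdef]
  have hsN : s N = R+1 := by
    have hN : (N:ℝ) ≠ 0 := by exact_mod_cast hNpos.ne'
    have hNh : (N:ℝ) * h = 2*R+2 := by rw [hhdef]; field_simp
    simp only [hsdef]
    linarith
  have hsmono : Monotone s := by
    intro i j hij
    simp only [hsdef]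
    have : (i:ℝ) ≤ j := by exact_mod_cast hij
    nlinarith
  have hsS : ∀ i, i ≤ N → s i ∈ Icc (-R-1) (R+1) := by
    intro i hi
    constructor
    · rw [← hs0]; exact hsmono (Nat.zero_le _)
    · rw [← hsN]; exact hsmono hi
  -- index function
  set idx : ℝ → ℕ := fun u => Nat.findGreatest (fun i => s i ≤ u) N with hidxdef
  have hidxle : ∀ u, idx u ≤ N := fun u => Nat.findGreatest_le N
  have hidx_spec : ∀ u, idx u ≠ 0 → s (idx u) ≤ u := by
    intro u h0
    exact Nat.findGreatest_of_ne_zero rfl h0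
  have hidx_iff : ∀ (u : ℝ) (i : ℕ), i < N → (s (i+1) ≤ u ↔ i+1 ≤ idx u) := by
    intro u i hi
    constructor
    · intro hsu
      exact Nat.le_findGreatest hi hsu
    · intro hle
      calc s (i+1) ≤ s (idx u) := hsmono hle
        _ ≤ u := hidx_spec u (by omega)
  -- floor approximation on the box coordinates
  have hidx_close : ∀ u : ℝ, u ∈ Icc (-R) R → s (idx u) ∈ Icc (-R-1) (R+1) ∧ |u - s (idx u)| < δ := by
    intro u hu
    have hle : s (idx u) ≤ u := by
      rcases Nat.eq_zero_or_pos (idx u) with h0 | h0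
      · rw [h0, hs0]; linarith [hu.1]
      · exact hidx_spec u (by omega)
    have hlt : u - s (idx u) < h := by
      have hidxN : idx u < N := by
        rcases eq_or_lt_of_le (hidxle u) with heq | hlt
        · exfalso
          have : s N ≤ u := by rw [← heq]; exact hle
          rw [hsN] at this
          linarith [hu.2]
        · exact hlt
      have : ¬ s (idx u + 1) ≤ u := Nat.findGreatest_is_greatest (Nat.lt_succ_self _) hidxN
      push_neg at this
      have hstep : s (idx u + 1) = s (idx u) + h := by
        simp only [hsdef]
        push_cast
        ring
      rw [hstep] at this
      linarith
    refine ⟨hsS _ (hidxle u), ?_⟩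
    rw [abs_sub_lt_iff]
    constructor
    · linarith
    · linarith
  -- indicator function
  set ind : ℝ → ℝ → ℝ := fun a w => if a ≤ w then 1 else 0 with hinddef
  set G : ℕ → ℕ → ℝ := fun i j => ψ (s i) (s j) with hGdef
  -- summation lemma
  have hsum : ∀ (g : ℕ → ℝ) (u : ℝ),
      (∑ i ∈ Finset.range N, (g (i+1) - g i) * ind (s (i+1)) u) = g (idx u) - g 0 := by
    intro g u
    have h1 : ∀ i ∈ Finset.range N,
        (g (i+1) - g i) * ind (s (i+1)) u
          = if i ∈ Finset.range (idx u) then (g (i+1) - g i) else 0 := by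
      intro i hi
      rw [Finset.mem_range] at hi
      simp only [hinddef, Finset.mem_range]
      by_cases hc : s (i+1) ≤ u
      · rw [if_pos hc, if_pos (by have := (hidx_iff u i hi).1 hc; omega), mul_one]
      · rw [if_neg hc, if_neg (fun hcon => hc ((hidx_iff u i hi).2 (by omega))), mul_zero]
    rw [Finset.sum_congr rfl h1, Finset.sum_ite_mem]
    have h2 : Finset.range N ∩ Finset.range (idx u) = Finset.range (idx u) := by
      ext i
      simp only [Finset.mem_inter, Finset.mem_range]
      have := hidxle u
      omega
    rw [h2, Finset.sum_range_sub]
  -- the grid approximant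
  set dd : ℕ → ℕ → ℝ := fun i j => (G (i+1) (j+1) - G i (j+1)) - (G (i+1) j - G i j) with hdddef
  set T : ℝ×ℝ → ℝ := fun p => G 0 0
    + (∑ i ∈ Finset.range N, (G (i+1) 0 - G i 0) * ind (s (i+1)) p.1)
    + (∑ j ∈ Finset.range N, (G 0 (j+1) - G 0 j) * ind (s (j+1)) p.2)
    + (∑ i ∈ Finset.range N, ∑ j ∈ Finset.range N,
        dd i j * (ind (s (i+1)) p.1 * ind (s (j+1)) p.2)) with hTdef
  have hTval : ∀ p : ℝ×ℝ, T p = G (idx p.1) (idx p.2) := by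
    intro p
    have e2 := hsum (fun i => G i 0) p.1
    have e3 := hsum (fun j => G 0 j) p.2
    have e4 : (∑ i ∈ Finset.range N, ∑ j ∈ Finset.range N,
        dd i j * (ind (s (i+1)) p.1 * ind (s (j+1)) p.2))
        = (G (idx p.1) (idx p.2) - G (idx p.1) 0) - (G 0 (idx p.2) - G 0 0) := by
      have inner : ∀ i, (∑ j ∈ Finset.range N,
          dd i j * (ind (s (i+1)) p.1 * ind (s (j+1)) p.2))
          = ((G (i+1) (idx p.2) - G i (idx p.2)) - (G (i+1) 0 - G i 0)) * ind (s (i+1)) p.1 := by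
        intro i
        have hj := hsum (fun j => G (i+1) j - G i j) p.2
        calc (∑ j ∈ Finset.range N, dd i j * (ind (s (i+1)) p.1 * ind (s (j+1)) p.2))
            = (∑ j ∈ Finset.range N,
                ((G (i+1) (j+1) - G i (j+1)) - (G (i+1) j - G i j)) * ind (s (j+1)) p.2)
                * ind (s (i+1)) p.1 := by
              rw [Finset.sum_mul]
              apply Finset.sum_congr rfl
              intro j _
              simp only [hdddef]
              ring
          _ = ((G (i+1) (idx p.2) - G i (idx p.2)) - (G (i+1) 0 - G i 0)) * ind (s (i+1)) p.1 := by
              rw [hj]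
      rw [Finset.sum_congr rfl (fun i _ => inner i)]
      have ho := hsum (fun i => G i (idx p.2) - G i 0) p.1
      rw [← ho]
      apply Finset.sum_congr rfl
      intro i _
      ring
    simp only [hTdef]
    rw [e2, e3, e4]
    ring
  -- approximation on the box
  have happrox : ∀ p : ℝ×ℝ, p ∈ box → |T p - ψ p.1 p.2| ≤ ε/2 := by
    rintro ⟨u, v⟩ hp
    obtain ⟨hu, hv⟩ : u ∈ Icc (-R) R ∧ v ∈ Icc (-R) R := ⟨hp.1, hp.2⟩
    obtain ⟨hsu, hdu⟩ := hidx_close u hu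
    obtain ⟨hsv, hdv⟩ := hidx_close v hv
    have hxy : dist ((s (idx u), s (idx v)) : ℝ×ℝ) ((u,v) : ℝ×ℝ) < δ := by
      rw [Prod.dist_eq]
      apply max_lt
      · rw [Real.dist_eq, abs_sub_comm]; exact hdu
      · rw [Real.dist_eq, abs_sub_comm]; exact hdv
    have hmem1 : ((s (idx u), s (idx v)) : ℝ×ℝ) ∈ S := ⟨hsu, hsv⟩
    have hmem2 : ((u,v) : ℝ×ℝ) ∈ S := hboxS hp
    have := hδ _ hmem1 _ hmem2 hxy
    rw [Real.dist_eq] at this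
    have hTv := hTval (u, v)
    simp only [hGdef] at hTv
    rw [hTv]
    exact this.le
  -- integrability and integral formula for T
  have hind1 : ∀ (c a : ℝ), (fun p : ℝ×ℝ => c * ind a p.1)
      = Set.indicator (Ici a ×ˢ (univ : Set ℝ)) (fun _ => c) := by
    intro c a; funext p
    simp only [hinddef, Set.indicator, mem_prod, mem_Ici, mem_univ, and_true]
    by_cases hc : a ≤ p.1 <;> simp [hc]
  have hind2 : ∀ (c a : ℝ), (fun p : ℝ×ℝ => c * ind a p.2)
      = Set.indicator ((univ : Set ℝ) ×ˢ Ici a) (fun _ => c) := by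
    intro c a; funext p
    simp only [hinddef, Set.indicator, mem_prod, mem_Ici, mem_univ, true_and]
    by_cases hc : a ≤ p.2 <;> simp [hc]
  have hind12 : ∀ (c a b : ℝ), (fun p : ℝ×ℝ => c * (ind a p.1 * ind b p.2))
      = Set.indicator (Ici a ×ˢ Ici b) (fun _ => c) := by
    intro c a b; funext p
    simp only [hinddef, Set.indicator, mem_prod, mem_Ici]
    by_cases hc : a ≤ p.1 <;> by_cases hc2 : b ≤ p.2 <;> simp [hc, hc2]
  have hTint : ∀ (ν : Measure (ℝ×ℝ)) [IsProbabilityMeasure ν], Integrable T ν := by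
    intro ν _
    simp only [hTdef]
    apply Integrable.add
    apply Integrable.add
    apply Integrable.add
    · exact integrable_const _
    · apply integrable_finset_sum
      intro i _
      rw [hind1]
      exact (integrable_const _).indicator (measurableSet_Ici.prod MeasurableSet.univ)
    · apply integrable_finset_sum
      intro j _
      rw [hind2]
      exact (integrable_const _).indicator (MeasurableSet.univ.prod measurableSet_Ici)
    · apply integrable_finset_sum
      intro i _
      apply integrable_finset_sum
      intro j _
      rw [hind12]
      exact (integrable_const _).indicator (measurableSet_Ici.prod measurableSet_Ici)
  have hTeval : ∀ (ν : Measure (ℝ×ℝ)) [IsProbabilityMeasure ν],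
      ∫ p, T p ∂ν = G 0 0
        + (∑ i ∈ Finset.range N, (G (i+1) 0 - G i 0) * (ν (Ici (s (i+1)) ×ˢ univ)).toReal)
        + (∑ j ∈ Finset.range N, (G 0 (j+1) - G 0 j) * (ν (univ ×ˢ Ici (s (j+1)))).toReal)
        + (∑ i ∈ Finset.range N, ∑ j ∈ Finset.range N,
            dd i j * (ν (Ici (s (i+1)) ×ˢ Ici (s (j+1)))).toReal) := by
    intro ν _
    simp only [hTdef]
    rw [integral_add, integral_add, integral_add]
    rotate_left
    · exact integrable_const _
    · apply integrable_finset_sum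
      intro i _
      rw [hind1]
      exact (integrable_const _).indicator (measurableSet_Ici.prod MeasurableSet.univ)
    · apply Integrable.add
      · exact integrable_const _
      · apply integrable_finset_sum
        intro i _
        rw [hind1]
        exact (integrable_const _).indicator (measurableSet_Ici.prod MeasurableSet.univ)
    · apply integrable_finset_sum
      intro j _
      rw [hind2]
      exact (integrable_const _).indicator (MeasurableSet.univ.prod measurableSet_Ici)
    · apply Integrable.add
      · apply Integrable.add
        · exact integrable_const _
        · apply integrable_finset_sum
          intro i _
          rw [hind1]
          exact (integrable_const _).indicator (measurableSet_Ici.prod MeasurableSet.univ)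
      · apply integrable_finset_sum
        intro j _
        rw [hind2]
        exact (integrable_const _).indicator (MeasurableSet.univ.prod measurableSet_Ici)
    · apply integrable_finset_sum
      intro i _
      apply integrable_finset_sum
      intro j _
      rw [hind12]
      exact (integrable_const _).indicator (measurableSet_Ici.prod measurableSet_Ici)
    congr 1
    congr 1
    congr 1
    · simp
    · rw [integral_finset_sum]
      · apply Finset.sum_congr rfl
        intro i _
        rw [hind1, integral_indicator_const _ (measurableSet_Ici.prod MeasurableSet.univ)]
        simp [mul_comm, Measure.real]
      · intro i _
        rw [hind1]
        exact (integrable_const _).indicator (measurableSet_Ici.prod MeasurableSet.univ)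
    · rw [integral_finset_sum]
      · apply Finset.sum_congr rfl
        intro j _
        rw [hind2, integral_indicator_const _ (MeasurableSet.univ.prod measurableSet_Ici)]
        simp [mul_comm, Measure.real]
      · intro j _
        rw [hind2]
        exact (integrable_const _).indicator (MeasurableSet.univ.prod measurableSet_Ici)
    · rw [integral_finset_sum]
      · apply Finset.sum_congr rfl
        intro i _
        rw [integral_finset_sum]
        · apply Finset.sum_congr rfl
          intro j _
          rw [hind12, integral_indicator_const _ (measurableSet_Ici.prod measurableSet_Ici)]
          simp [mul_comm, Measure.real]
        · intro j _
          rw [hind12]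
          exact (integrable_const _).indicator (measurableSet_Ici.prod measurableSet_Ici)
      · intro i _
        apply integrable_finset_sum
        intro j _
        rw [hind12]
        exact (integrable_const _).indicator (measurableSet_Ici.prod measurableSet_Ici)
  -- marginal equalities
  have hfst' : ∀ a : ℝ, μ (Ici a ×ˢ univ) = κ (Ici a ×ˢ univ) := by
    intro a
    have hpre : (Prod.fst : ℝ×ℝ → ℝ) ⁻¹' (Ici a) = Ici a ×ˢ univ := by
      ext p; simp [mem_prod]
    rw [← hpre, ← Measure.map_apply measurable_fst measurableSet_Ici,
      ← Measure.map_apply measurable_fst measurableSet_Ici, hfst]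
  have hsnd' : ∀ a : ℝ, μ (univ ×ˢ Ici a) = κ (univ ×ˢ Ici a) := by
    intro a
    have hpre : (Prod.snd : ℝ×ℝ → ℝ) ⁻¹' (Ici a) = univ ×ˢ Ici a := by
      ext p; simp [mem_prod]
    rw [← hpre, ← Measure.map_apply measurable_snd measurableSet_Ici,
      ← Measure.map_apply measurable_snd measurableSet_Ici, hsnd]
  -- T-integral comparison
  have hTcomp : ∫ p, T p ∂κ ≤ ∫ p, T p ∂μ := by
    rw [hTeval μ, hTeval κ]
    have hB : (∑ i ∈ Finset.range N, (G (i+1) 0 - G i 0) * (κ (Ici (s (i+1)) ×ˢ Set.univ)).toReal)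
        = (∑ i ∈ Finset.range N, (G (i+1) 0 - G i 0) * (μ (Ici (s (i+1)) ×ˢ Set.univ)).toReal) := by
      apply Finset.sum_congr rfl
      intro i _
      rw [hfst']
    have hC : (∑ j ∈ Finset.range N, (G 0 (j+1) - G 0 j) * (κ (Set.univ ×ˢ Ici (s (j+1)))).toReal)
        = (∑ j ∈ Finset.range N, (G 0 (j+1) - G 0 j) * (μ (Set.univ ×ˢ Ici (s (j+1)))).toReal) := by
      apply Finset.sum_congr rfl
      intro j _
      rw [hsnd']
    rw [hB, hC]
    apply add_le_add le_rfl
    apply Finset.sum_le_sum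
    intro i _
    apply Finset.sum_le_sum
    intro j _
    have hddle : dd i j ≤ 0 := by
      have := hqa (s i) (s (i+1)) (s j) (s (j+1)) (hsmono (Nat.le_succ _)) (hsmono (Nat.le_succ _))
      simp only [hdddef, hGdef]
      linarith
    have hmle : (μ (Ici (s (i+1)) ×ˢ Ici (s (j+1)))).toReal
        ≤ (κ (Ici (s (i+1)) ×ˢ Ici (s (j+1)))).toReal :=
      ENNReal.toReal_mono (measure_ne_top _ _) (hdom _ _)
    exact mul_le_mul_of_nonpos_left hmle hddle
  have hκ1 : ∫ p, ψ p.1 p.2 ∂κ ≤ ∫ p, T p ∂κ + ε/2 := by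
    calc ∫ p, ψ p.1 p.2 ∂κ ≤ ∫ p, (T p + ε/2) ∂κ := by
          apply integral_mono_ae hintκ ((hTint κ).add (integrable_const _))
          filter_upwards [haeκ] with p hp
          simp only [Pi.add_apply]
          linarith [(abs_le.1 (happrox p hp)).1]
      _ = ∫ p, T p ∂κ + ε/2 := by
          rw [integral_add (hTint κ) (integrable_const _), integral_const]
          simp
  have hμ1 : ∫ p, T p ∂μ ≤ ∫ p, ψ p.1 p.2 ∂μ + ε/2 := by
    calc ∫ p, T p ∂μ ≤ ∫ p, (ψ p.1 p.2 + ε/2) ∂μ := by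
          apply integral_mono_ae (hTint μ) (hintμ.add (integrable_const _))
          filter_upwards [haeμ] with p hp
          simp only [Pi.add_apply]
          linarith [(abs_le.1 (happrox p hp)).2]
      _ = ∫ p, ψ p.1 p.2 ∂μ + ε/2 := by
          rw [integral_add hintμ (integrable_const _), integral_const]
          simp
  linarith


lemma quantile_tendsto (P : Measure ℝ) [IsProbabilityMeasure P]
    (Pn : ℕ → Measure ℝ) [∀ n, IsProbabilityMeasure (Pn n)]
    (δ : ℕ → ℝ) (hδ : Tendsto δ atTop (𝓝 0))
    (hclose : ∀ n z, |((Pn n) (Iic z)).toReal - (P (Iic z)).toReal| ≤ δ n) :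
    ∀ᵐ x ∂(volume.restrict (Ioo (0:ℝ) 1)),
      Tendsto (fun n => quantileFn (Pn n) x) atTop (𝓝 (quantileFn P x)) := by
  set f := quantileFn P with hf
  -- the bad set is countable
  set Bad : Set ℝ := {x ∈ Ioo (0:ℝ) 1 |
      sSup (f '' Ioo 0 x) < f x ∨ f x < sInf (f '' Ioo x 1)} with hBad
  have hmono := quantileFn_monotoneOn P
  have hBadsub : Bad ⊆ ⋃ q : ℚ, {x ∈ Ioo (0:ℝ) 1 |
      sSup (f '' Ioo 0 x) < (q:ℝ) ∧ (q:ℝ) < sInf (f '' Ioo x 1)} := by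
    intro x hx
    obtain ⟨hxI, hgap⟩ := hx
    have hL : sSup (f '' Ioo 0 x) ≤ f x := by
      apply csSup_le ((nonempty_Ioo.2 hxI.1).image f)
      rintro _ ⟨y, hy, rfl⟩
      exact hmono ⟨hy.1, hy.2.trans hxI.2⟩ hxI hy.2.le
    have hR : f x ≤ sInf (f '' Ioo x 1) := by
      apply le_csInf ((nonempty_Ioo.2 hxI.2).image f)
      rintro _ ⟨y, hy, rfl⟩
      exact hmono hxI ⟨hxI.1.trans hy.1, hy.2⟩ hy.1.le
    have : sSup (f '' Ioo 0 x) < sInf (f '' Ioo x 1) := by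
      rcases hgap with h | h
      · exact lt_of_lt_of_le h hR
      · exact lt_of_le_of_lt hL h
    obtain ⟨q, hq1, hq2⟩ := exists_rat_btwn this
    exact mem_iUnion.2 ⟨q, hxI, hq1, hq2⟩
  have hBadcount : Bad.Countable := by
    refine Set.Countable.mono hBadsub (Set.countable_iUnion (fun q => ?_))
    apply Set.Subsingleton.countable
    have key : ∀ x ∈ {x | x ∈ Ioo (0:ℝ) 1 ∧
        sSup (f '' Ioo 0 x) < (q:ℝ) ∧ (q:ℝ) < sInf (f '' Ioo x 1)},
        ∀ y ∈ {x | x ∈ Ioo (0:ℝ) 1 ∧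
        sSup (f '' Ioo 0 x) < (q:ℝ) ∧ (q:ℝ) < sInf (f '' Ioo x 1)}, ¬(x < y) := by
      intro x hx y hy hxy
      have hbb : BddBelow (f '' Ioo x 1) := by
        refine ⟨f x, ?_⟩
        rintro _ ⟨w, hw, rfl⟩
        exact hmono hx.1 ⟨hx.1.1.trans hw.1, hw.2⟩ hw.1.le
      have hba : BddAbove (f '' Ioo 0 y) := by
        refine ⟨f y, ?_⟩
        rintro _ ⟨w, hw, rfl⟩
        exact hmono ⟨hw.1, hw.2.trans hy.1.2⟩ hy.1 hw.2.le
      set m := (x + y)/2 with hm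
      have hmx : x < m := by simp only [hm]; linarith
      have hmy : m < y := by simp only [hm]; linarith
      have h1 : sInf (f '' Ioo x 1) ≤ f m :=
        csInf_le hbb ⟨m, ⟨hmx, hmy.trans hy.1.2⟩, rfl⟩
      have h2 : f m ≤ sSup (f '' Ioo 0 y) :=
        le_csSup hba ⟨m, ⟨hx.1.1.trans hmx, hmy⟩, rfl⟩
      have h3 := hx.2.2
      have h4 := hy.2.1
      linarith
    intro x hx y hy
    rcases lt_trichotomy x y with hxy | heq | hyx
    · exact absurd hxy (key x hx y hy)
    · exact heq
    · exact absurd hyx (key y hy x hx)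
  -- convergence at good points
  have hconv : ∀ x ∈ Ioo (0:ℝ) 1, x ∉ Bad →
      Tendsto (fun n => quantileFn (Pn n) x) atTop (𝓝 (f x)) := by
    intro x hxI hxg
    simp only [hBad, mem_setOf_eq, not_and, not_or, not_lt] at hxg
    obtain ⟨hLx, hRx⟩ := hxg hxI
    apply tendsto_order.2
    constructor
    · intro b hb
      have hbL : b < sSup (f '' Ioo 0 x) := lt_of_lt_of_le hb hLx
      obtain ⟨_, ⟨y, hy, rfl⟩, hby⟩ :=
        exists_lt_of_lt_csSup ((nonempty_Ioo.2 hxI.1).image f) hbL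
      have hyx : 0 < x - y := by linarith [hy.2]
      have hev : ∀ᶠ n in atTop, δ n < x - y := hδ.eventually (eventually_lt_nhds hyx)
      filter_upwards [hev] with n hn
      -- show b < quantileFn (Pn n) x, via f y ≤ quantileFn (Pn n) x
      have hyI : y ∈ Ioo (0:ℝ) 1 := ⟨hy.1, hy.2.trans hxI.2⟩
      have key : f y ≤ quantileFn (Pn n) x := by
        rw [hf, quantileFn_le_iff P hyI]
        -- y ≤ F_P (quantileFn (Pn n) x)
        have h1 : x ≤ ((Pn n) (Iic (quantileFn (Pn n) x))).toReal :=
          (quantileFn_le_iff (Pn n) hxI).1 le_rfl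
        have h2 := hclose n (quantileFn (Pn n) x)
        have := abs_le.1 h2
        linarith [this.1]
      linarith
    · intro b hb
      have hbR : sInf (f '' Ioo x 1) < b := lt_of_le_of_lt hRx hb
      obtain ⟨_, ⟨y, hy, rfl⟩, hby⟩ :=
        exists_lt_of_csInf_lt ((nonempty_Ioo.2 hxI.2).image f) hbR
      have hyx : 0 < y - x := by linarith [hy.1]
      have hev : ∀ᶠ n in atTop, δ n < y - x := hδ.eventually (eventually_lt_nhds hyx)
      filter_upwards [hev] with n hn
      have hyI : y ∈ Ioo (0:ℝ) 1 := ⟨hxI.1.trans hy.1, hy.2⟩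
      have key : quantileFn (Pn n) x ≤ f y := by
        rw [quantileFn_le_iff (Pn n) hxI]
        have h1 : y ≤ (P (Iic (f y))).toReal := (quantileFn_le_iff P hyI).1 le_rfl
        have h2 := hclose n (f y)
        have := abs_le.1 h2
        linarith [this.2]
      linarith
  -- assemble a.e. statement
  have hBadnull : volume Bad = 0 := hBadcount.measure_zero _
  have hae1 : ∀ᵐ x ∂(volume.restrict (Ioo (0:ℝ) 1)), x ∉ Bad := by
    apply ae_restrict_of_ae
    rw [MeasureTheory.ae_iff]
    simpa using hBadnull
  filter_upwards [ae_restrict_mem measurableSet_Ioo, hae1] with x hx1 hx2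
  exact hconv x hx1 hx2


lemma comonotone_lintegral (P Q : Measure ℝ) [IsProbabilityMeasure P] [IsProbabilityMeasure Q]
    (ψ : ℝ → ℝ → ℝ) (hψc : Continuous fun p : ℝ×ℝ => ψ p.1 p.2) :
    ∫⁻ p, ENNReal.ofReal (ψ p.1 p.2) ∂(comonotoneCoupling P Q)
      = ∫⁻ x in Set.Ioo (0:ℝ) 1, ENNReal.ofReal (ψ (quantileFn P x) (quantileFn Q x)) := by
  rw [comonotoneCoupling, lintegral_map hψc.measurable.ennreal_ofReal (measurable_qpair P Q)]

lemma optimality (P Q : Measure ℝ) [IsProbabilityMeasure P] [IsProbabilityMeasure Q]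
    (ψ : ℝ → ℝ → ℝ) (hψ0 : ∀ u v, 0 ≤ ψ u v) (hψc : Continuous fun p : ℝ×ℝ => ψ p.1 p.2)
    (hqa : ∀ u₁ u₂ v₁ v₂ : ℝ, u₁ ≤ u₂ → v₁ ≤ v₂ → ψ u₁ v₁ + ψ u₂ v₂ ≤ ψ u₂ v₁ + ψ u₁ v₂)
    (π : Measure (ℝ × ℝ)) [IsProbabilityMeasure π]
    (hfst : π.map Prod.fst = P) (hsnd : π.map Prod.snd = Q) :
    ∫⁻ p, ENNReal.ofReal (ψ p.1 p.2) ∂(comonotoneCoupling P Q)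
      ≤ ∫⁻ p, ENNReal.ofReal (ψ p.1 p.2) ∂π := by
  classical
  set J : ℕ → Set (ℝ×ℝ) := fun n => Icc (-(n+1:ℝ)) (n+1) ×ˢ Icc (-(n+1:ℝ)) (n+1) with hJdef
  have hJm : ∀ n, MeasurableSet (J n) := fun n => measurableSet_Icc.prod measurableSet_Icc
  have hJmono : Monotone J := by
    intro n m hnm
    have h1 : (n:ℝ) + 1 ≤ (m:ℝ) + 1 := by exact_mod_cast by omega
    exact Set.prod_mono (Icc_subset_Icc (by linarith) h1) (Icc_subset_Icc (by linarith) h1)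
  set t : ℕ → ℝ≥0∞ := fun n => π (J n)ᶜ with htdef
  set πn : ℕ → Measure (ℝ×ℝ) :=
    fun n => π.restrict (J n) + (t n) • Measure.dirac ((0:ℝ),(0:ℝ)) with hπndef
  have hzeroJ : ∀ n, ((0:ℝ),(0:ℝ)) ∈ J n := by
    intro n
    have h : (0:ℝ) ≤ n := Nat.cast_nonneg n
    refine ⟨?_, ?_⟩ <;> rw [mem_Icc] <;> constructor <;> simp <;> linarith
  have hπn_apply : ∀ n (A : Set (ℝ×ℝ)), MeasurableSet A →
      πn n A = π (A ∩ J n) + (t n) * (A.indicator (1 : (ℝ×ℝ) → ℝ≥0∞) ((0:ℝ),(0:ℝ))) := by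
    intro n A hA
    simp only [hπndef, Measure.coe_add, Pi.add_apply, Measure.restrict_apply hA,
      Measure.smul_apply, smul_eq_mul, Measure.dirac_apply' _ hA]
  have hπnprob : ∀ n, IsProbabilityMeasure (πn n) := by
    intro n
    constructor
    rw [hπn_apply n univ MeasurableSet.univ]
    simp only [univ_inter, indicator_univ, Pi.one_apply, mul_one, htdef]
    rw [measure_add_measure_compl (hJm n), measure_univ]
  haveI := hπnprob
  set Pn : ℕ → Measure ℝ := fun n => (πn n).map Prod.fst with hPndef
  set Qn : ℕ → Measure ℝ := fun n => (πn n).map Prod.snd with hQndef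
  have hPnprob : ∀ n, IsProbabilityMeasure (Pn n) :=
    fun n => Measure.isProbabilityMeasure_map measurable_fst.aemeasurable
  have hQnprob : ∀ n, IsProbabilityMeasure (Qn n) :=
    fun n => Measure.isProbabilityMeasure_map measurable_snd.aemeasurable
  haveI := hPnprob
  haveI := hQnprob
  set κn : ℕ → Measure (ℝ×ℝ) := fun n => comonotoneCoupling (Pn n) (Qn n) with hκndef
  haveI hκnprob : ∀ n, IsProbabilityMeasure (κn n) := fun n => by
    rw [show κn n = comonotoneCoupling (Pn n) (Qn n) from rfl]
    infer_instance
  -- tail estimates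
  have htail : Tendsto (fun n => t n) atTop (𝓝 0) := by
    have h0 : (⋂ n, (J n)ᶜ) = ∅ := by
      apply eq_empty_iff_forall_notMem.2
      intro p hp
      simp only [mem_iInter, mem_compl_iff] at hp
      obtain ⟨n, hn⟩ := exists_nat_ge (max |p.1| |p.2|)
      apply hp n
      have h1 := (abs_le.1 (le_trans (le_max_left _ _) hn))
      have h2 := (abs_le.1 (le_trans (le_max_right _ _) hn))
      exact ⟨⟨by linarith [h1.1], by linarith [h1.2]⟩, ⟨by linarith [h2.1], by linarith [h2.2]⟩⟩
    have := tendsto_measure_iInter_atTop (μ := π) (s := fun n => (J n)ᶜ)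
      (fun n => (hJm n).compl.nullMeasurableSet)
      (fun i j hij => compl_subset_compl.2 (hJmono hij)) ⟨0, measure_ne_top _ _⟩
    rw [h0, measure_empty] at this
    exact this
  have htailR : Tendsto (fun n => (t n).toReal) atTop (𝓝 0) := by
    have := (ENNReal.tendsto_toReal (by simp : (0:ℝ≥0∞) ≠ ⊤)).comp htail
    rw [ENNReal.toReal_zero] at this
    exact this
  -- cdf closeness for the first marginals
  have hclose : ∀ (pr : ℝ×ℝ → ℝ) (hpr : Measurable pr),
      ∀ n z, |((πn n).map pr (Iic z)).toReal - (π.map pr (Iic z)).toReal| ≤ (t n).toReal := by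
    intro pr hpr n z
    set A : Set (ℝ×ℝ) := pr ⁻¹' (Iic z) with hA
    have hAm : MeasurableSet A := hpr measurableSet_Iic
    rw [Measure.map_apply hpr measurableSet_Iic, Measure.map_apply hpr measurableSet_Iic,
      hπn_apply n A hAm]
    have hsplit : π (A ∩ J n) + π (A \ J n) = π A := measure_inter_add_diff A (hJm n)
    have hble : π (A \ J n) ≤ t n := measure_mono (fun p hp => hp.2)
    have hfin : ∀ B : Set (ℝ×ℝ), π B ≠ ⊤ := fun B => measure_ne_top _ _
    rw [← hsplit]
    rw [ENNReal.toReal_add (hfin _) (hfin _)]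
    by_cases hmem : ((0:ℝ),(0:ℝ)) ∈ A
    · rw [indicator_of_mem hmem, Pi.one_apply, mul_one, ENNReal.toReal_add (hfin _) (by
        rw [htdef]; exact measure_ne_top _ _)]
      have h1 : (π (A \ J n)).toReal ≤ (t n).toReal :=
        ENNReal.toReal_mono (measure_ne_top _ _) hble
      have h2 : 0 ≤ (π (A \ J n)).toReal := ENNReal.toReal_nonneg
      rw [abs_le]
      constructor <;> [linarith; linarith [ENNReal.toReal_nonneg (a := t n)]]
    · rw [indicator_of_notMem hmem, mul_zero, add_zero]
      have h1 : (π (A \ J n)).toReal ≤ (t n).toReal :=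
        ENNReal.toReal_mono (measure_ne_top _ _) hble
      have h2 : 0 ≤ (π (A \ J n)).toReal := ENNReal.toReal_nonneg
      rw [abs_le]
      constructor <;> [linarith; linarith [ENNReal.toReal_nonneg (a := t n)]]
  have hcloseP := hclose Prod.fst measurable_fst
  have hcloseQ := hclose Prod.snd measurable_snd
  rw [hfst] at hcloseP
  rw [hsnd] at hcloseQ
  -- box facts
  have hπnbox : ∀ n, πn n (Icc (-(n+1:ℝ)) (n+1) ×ˢ Icc (-(n+1:ℝ)) (n+1)) = 1 := by
    intro n
    rw [hπn_apply n _ (hJm n), inter_self, indicator_of_mem (hzeroJ n), Pi.one_apply, mul_one]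
    simp only [htdef]
    rw [measure_add_measure_compl (hJm n), measure_univ]
  have hPnbox : ∀ n, Pn n (Icc (-(n+1:ℝ)) (n+1)) = 1 := by
    intro n
    rw [hPndef]
    rw [Measure.map_apply measurable_fst measurableSet_Icc]
    refine le_antisymm (by
      calc πn n (Prod.fst ⁻¹' Icc (-(n+1:ℝ)) (n+1)) ≤ πn n univ := measure_mono (subset_univ _)
        _ = 1 := measure_univ) ?_
    calc (1:ℝ≥0∞) = πn n (J n) := (hπnbox n).symm
      _ ≤ πn n (Prod.fst ⁻¹' Icc (-(n+1:ℝ)) (n+1)) := measure_mono (fun p hp => hp.1)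
  have hQnbox : ∀ n, Qn n (Icc (-(n+1:ℝ)) (n+1)) = 1 := by
    intro n
    rw [hQndef]
    rw [Measure.map_apply measurable_snd measurableSet_Icc]
    refine le_antisymm (by
      calc πn n (Prod.snd ⁻¹' Icc (-(n+1:ℝ)) (n+1)) ≤ πn n univ := measure_mono (subset_univ _)
        _ = 1 := measure_univ) ?_
    calc (1:ℝ≥0∞) = πn n (J n) := (hπnbox n).symm
      _ ≤ πn n (Prod.snd ⁻¹' Icc (-(n+1:ℝ)) (n+1)) := measure_mono (fun p hp => hp.2)
  have hκnbox : ∀ n, κn n (Icc (-(n+1:ℝ)) (n+1) ×ˢ Icc (-(n+1:ℝ)) (n+1)) = 1 := by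
    intro n
    simp only [hκndef]
    rw [comonotoneCoupling,
      Measure.map_apply (measurable_qpair (Pn n) (Qn n)) (hJm n),
      Measure.restrict_apply ((measurable_qpair (Pn n) (Qn n)) (hJm n))]
    have hsub : Ioo (0:ℝ) 1 ⊆ (fun x => (quantileFn (Pn n) x, quantileFn (Qn n) x)) ⁻¹' (J n) := by
      intro x hx
      exact ⟨quantileFn_mem_Icc (Pn n) (hPnbox n) hx, quantileFn_mem_Icc (Qn n) (hQnbox n) hx⟩
    rw [inter_eq_self_of_subset_right hsub, Real.volume_Ioo]
    simp
  -- core comparison for each n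
  have hcore : ∀ n, ∫⁻ p, ENNReal.ofReal (ψ p.1 p.2) ∂(κn n)
      ≤ ∫⁻ p, ENNReal.ofReal (ψ p.1 p.2) ∂(πn n) := by
    intro n
    apply core_grid (πn n) (κn n) ?_ ?_ ((n:ℝ)+1) (by
      have : (0:ℝ) ≤ n := Nat.cast_nonneg n
      linarith) ?_ ?_ ?_ ψ hψ0 hψc hqa
    · rw [show κn n = comonotoneCoupling (Pn n) (Qn n) from rfl, comonotone_map_fst (Pn n) (Qn n)]
    · rw [show κn n = comonotoneCoupling (Pn n) (Qn n) from rfl, comonotone_map_snd (Pn n) (Qn n)]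
    · have := hπnbox n
      simpa using this
    · have := hκnbox n
      simpa using this
    · intro s' t'
      calc πn n (Ici s' ×ˢ Ici t') ≤ min (Pn n (Ici s')) (Qn n (Ici t')) :=
            coupling_survival_le (Pn n) (Qn n) (πn n) rfl rfl s' t'
        _ = κn n (Ici s' ×ˢ Ici t') := (comonotone_survival (Pn n) (Qn n) s' t').symm
  -- lintegral of πn vs π
  have hπnint : ∀ n, ∫⁻ p, ENNReal.ofReal (ψ p.1 p.2) ∂(πn n)
      ≤ (∫⁻ p, ENNReal.ofReal (ψ p.1 p.2) ∂π) + t n * ENNReal.ofReal (ψ 0 0) := by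
    intro n
    rw [hπndef]
    rw [lintegral_add_measure, lintegral_smul_measure,
      lintegral_dirac' _ hψc.measurable.ennreal_ofReal]
    apply add_le_add
    · exact le_trans (le_of_eq rfl) (setLIntegral_le_lintegral _ _)
    · exact le_rfl
  -- a.e. convergence of quantile pairs
  have haeP := quantile_tendsto P Pn (fun n => (t n).toReal) htailR hcloseP
  have haeQ := quantile_tendsto Q Qn (fun n => (t n).toReal) htailR hcloseQ
  -- final chain
  rw [comonotone_lintegral P Q ψ hψc]
  have hmeasn : ∀ n, Measurable (fun x =>
      ENNReal.ofReal (ψ (quantileFn (Pn n) x) (quantileFn (Qn n) x))) := by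
    intro n
    exact (hψc.measurable.comp
      ((measurable_quantileFn (Pn n)).prodMk (measurable_quantileFn (Qn n)))).ennreal_ofReal
  have hstep1 : ∫⁻ x in Set.Ioo (0:ℝ) 1, ENNReal.ofReal (ψ (quantileFn P x) (quantileFn Q x))
      ≤ atTop.liminf (fun n => ∫⁻ x in Set.Ioo (0:ℝ) 1,
          ENNReal.ofReal (ψ (quantileFn (Pn n) x) (quantileFn (Qn n) x))) := by
    have hcongr : ∫⁻ x in Set.Ioo (0:ℝ) 1, ENNReal.ofReal (ψ (quantileFn P x) (quantileFn Q x))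
        = ∫⁻ x in Set.Ioo (0:ℝ) 1, atTop.liminf (fun n =>
            ENNReal.ofReal (ψ (quantileFn (Pn n) x) (quantileFn (Qn n) x))) := by
      apply lintegral_congr_ae
      filter_upwards [haeP, haeQ] with x hxP hxQ
      have : Tendsto (fun n => ENNReal.ofReal (ψ (quantileFn (Pn n) x) (quantileFn (Qn n) x)))
          atTop (𝓝 (ENNReal.ofReal (ψ (quantileFn P x) (quantileFn Q x)))) := by
        apply (ENNReal.continuous_ofReal.tendsto _).comp
        exact (hψc.tendsto _).comp (hxP.prodMk_nhds hxQ)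
      exact this.liminf_eq.symm
    rw [hcongr]
    exact lintegral_liminf_le hmeasn
  have hstep2 : ∀ n, ∫⁻ x in Set.Ioo (0:ℝ) 1,
      ENNReal.ofReal (ψ (quantileFn (Pn n) x) (quantileFn (Qn n) x))
      = ∫⁻ p, ENNReal.ofReal (ψ p.1 p.2) ∂(κn n) := by
    intro n
    rw [hκndef, comonotone_lintegral (Pn n) (Qn n) ψ hψc]
  apply le_trans hstep1
  apply ENNReal.le_of_forall_pos_le_add
  intro ε hε hfin
  have hmul : Tendsto (fun n => t n * ENNReal.ofReal (ψ 0 0)) atTop (𝓝 0) := by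
    have := ENNReal.Tendsto.mul_const (b := ENNReal.ofReal (ψ 0 0)) htail
      (Or.inr ENNReal.ofReal_ne_top)
    simpa using this
  have hev : ∀ᶠ n in atTop, t n * ENNReal.ofReal (ψ 0 0) < (ε:ℝ≥0∞) := by
    apply hmul.eventually (gt_mem_nhds ?_)
    exact_mod_cast hε
  apply liminf_le_of_frequently_le' (α := ℕ)
  apply Eventually.frequently
  filter_upwards [hev] with n hn
  calc ∫⁻ x in Set.Ioo (0:ℝ) 1, ENNReal.ofReal (ψ (quantileFn (Pn n) x) (quantileFn (Qn n) x))
      = ∫⁻ p, ENNReal.ofReal (ψ p.1 p.2) ∂(κn n) := hstep2 n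
    _ ≤ ∫⁻ p, ENNReal.ofReal (ψ p.1 p.2) ∂(πn n) := hcore n
    _ ≤ (∫⁻ p, ENNReal.ofReal (ψ p.1 p.2) ∂π) + t n * ENNReal.ofReal (ψ 0 0) := hπnint n
    _ ≤ (∫⁻ p, ENNReal.ofReal (ψ p.1 p.2) ∂π) + ε := add_le_add le_rfl hn.le

/-- the comonotone coupling `𝔓^com` has first marginal `P` and
second marginal `Q`, its joint distribution function is
`F_{𝔓^com}(u,v) = min{F_P(u), F_Q(v)}`, and for every continuous quasi-antitone
cost `ψ̃ : ℝ × ℝ → [0,∞)` the minimum of `∫ ψ̃ dπ` over all couplings `π` of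
`P` and `Q` is attained at `𝔓^com` and equals
`∫_{(0,1)} ψ̃(F_P^←(x), F_Q^←(x)) dλ_L(x)`. -/
theorem comonotone_coupling_optimal (P Q : Measure ℝ)
    [IsProbabilityMeasure P] [IsProbabilityMeasure Q] :
    (comonotoneCoupling P Q).map Prod.fst = P
    ∧ (comonotoneCoupling P Q).map Prod.snd = Q
    ∧ (∀ u v : ℝ, comonotoneCoupling P Q (Set.Iic u ×ˢ Set.Iic v)
        = min (P (Set.Iic u)) (Q (Set.Iic v)))
    ∧ (∀ ψ : ℝ → ℝ → ℝ, (∀ u v, 0 ≤ ψ u v) →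
        Continuous (fun p : ℝ × ℝ => ψ p.1 p.2) →
        (∀ u₁ u₂ v₁ v₂ : ℝ, u₁ ≤ u₂ → v₁ ≤ v₂ →
          ψ u₁ v₁ + ψ u₂ v₂ ≤ ψ u₂ v₁ + ψ u₁ v₂) →
        (∫⁻ p, ENNReal.ofReal (ψ p.1 p.2) ∂(comonotoneCoupling P Q)
            = ∫⁻ x in Set.Ioo (0:ℝ) 1,
                ENNReal.ofReal (ψ (quantileFn P x) (quantileFn Q x)))
        ∧ ∀ π : Measure (ℝ × ℝ), IsProbabilityMeasure π →
            π.map Prod.fst = P → π.map Prod.snd = Q →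
            ∫⁻ p, ENNReal.ofReal (ψ p.1 p.2) ∂(comonotoneCoupling P Q)
              ≤ ∫⁻ p, ENNReal.ofReal (ψ p.1 p.2) ∂π) := by
  refine ⟨comonotone_map_fst P Q, comonotone_map_snd P Q,
    fun u v => comonotone_cdf P Q u v, ?_⟩
  intro ψ hψ0 hψc hqa
  refine ⟨comonotone_lintegral P Q ψ hψc, ?_⟩
  intro π hπ hfst hsnd
  haveI := hπ
  exact optimality P Q ψ hψ0 hψc hqa π hfst hsnd
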